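/- Let ν > 0 and k real with k² < 1, let u₁ = ν/(1−k²) and u₂ = νk/(1−k²), let f(ξ) = ξ − (k/2)·log((1 + k tanh ξ)/(1 − k tanh ξ)) on (0, ∞), and let ξ : (0, ∞) → (0, ∞) be the inverse of f composed with multiplication by ν, i.e. ν τ = f(ξ(τ)) for all τ > 0. Then the function u(τ) = (ν/(1−k²)) coth(ξ(τ)) is differentiable on (0, ∞) and satisfies u'(τ) = −(u(τ)² − u₁²)(u(τ)² − u₂²)/u(τ)² for all τ > 0. -/

import Mathlib

/-- under the reparametrization `ντ = f(ξ(τ))`, the function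
`u(τ) = (ν/(1−k²)) coth(ξ(τ))` solves `u' = −(u²−u₁²)(u²−u₂²)/u²`. -/
theorem stmt_7 (ν k : ℝ) (hν : 0 < ν) (hk : k ^ 2 < 1)
    (u₁ u₂ : ℝ) (hu₁ : u₁ = ν / (1 - k ^ 2)) (hu₂ : u₂ = ν * k / (1 - k ^ 2))
    (f : ℝ → ℝ)
    (hf : ∀ ξ, f ξ = ξ - k / 2 *
      Real.log ((1 + k * Real.tanh ξ) / (1 - k * Real.tanh ξ)))
    (ξ : ℝ → ℝ)
    (hξpos : ∀ τ ∈ Set.Ioi (0 : ℝ), 0 < ξ τ)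
    (hξ : ∀ τ ∈ Set.Ioi (0 : ℝ), ν * τ = f (ξ τ))
    (u : ℝ → ℝ)
    (hu : ∀ τ, u τ = ν / (1 - k ^ 2) * (Real.cosh (ξ τ) / Real.sinh (ξ τ))) :
    ∀ τ ∈ Set.Ioi (0 : ℝ),
      HasDerivAt u (-(((u τ) ^ 2 - u₁ ^ 2) * ((u τ) ^ 2 - u₂ ^ 2)) / (u τ) ^ 2) τ := by
  have hk1 : (0:ℝ) < 1 - k ^ 2 := by linarith
  have hkabs : |k| < 1 := by
    rw [abs_lt]; constructor <;> nlinarith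
  -- tanh bounds
  have htanh_lt : ∀ x : ℝ, |Real.tanh x| < 1 := by
    intro x
    have hc := Real.cosh_pos x
    have hsq := Real.cosh_sq x
    rw [Real.tanh_eq_sinh_div_cosh, abs_div, abs_of_pos hc, div_lt_one hc]
    nlinarith [abs_nonneg (Real.sinh x), sq_abs (Real.sinh x)]
  have hkt : ∀ x : ℝ, |k * Real.tanh x| < 1 := by
    intro x
    rw [abs_mul]
    calc |k| * |Real.tanh x| ≤ |k| * 1 :=
          mul_le_mul_of_nonneg_left (le_of_lt (htanh_lt x)) (abs_nonneg k)
      _ = |k| := mul_one _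
      _ < 1 := hkabs
  have hpos1 : ∀ x : ℝ, 0 < 1 + k * Real.tanh x := by
    intro x; have := abs_lt.mp (hkt x); linarith [this.1]
  have hpos2 : ∀ x : ℝ, 0 < 1 - k * Real.tanh x := by
    intro x; have := abs_lt.mp (hkt x); linarith [this.2]
  have hposkt : ∀ x : ℝ, 0 < 1 - k ^ 2 * Real.tanh x ^ 2 := by
    intro x
    have := hkt x
    nlinarith [sq_abs (k * Real.tanh x), abs_nonneg (k * Real.tanh x)]
  -- derivative of tanh
  have htanh : ∀ x : ℝ, HasDerivAt Real.tanh (1 - Real.tanh x ^ 2) x := by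
    intro x
    have hc := Real.cosh_pos x
    have h : HasDerivAt (fun y => Real.sinh y / Real.cosh y)
        ((Real.cosh x * Real.cosh x - Real.sinh x * Real.sinh x) / Real.cosh x ^ 2) x :=
      (Real.hasDerivAt_sinh x).div (Real.hasDerivAt_cosh x) (ne_of_gt hc)
    have heq : (Real.tanh : ℝ → ℝ) = fun y => Real.sinh y / Real.cosh y := by
      funext y; exact Real.tanh_eq_sinh_div_cosh y
    rw [heq]
    convert h using 1
    beta_reduce
    field_simp
  -- derivative of f
  set F : ℝ → ℝ := fun x => (1 - k ^ 2) / (1 - k ^ 2 * Real.tanh x ^ 2) with hF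
  have hFpos : ∀ x : ℝ, 0 < F x := fun x => div_pos hk1 (hposkt x)
  have hfD : ∀ x : ℝ, HasDerivAt f (F x) x := by
    intro x
    have h1 : HasDerivAt (fun y => 1 + k * Real.tanh y) (k * (1 - Real.tanh x ^ 2)) x :=
      ((htanh x).const_mul k).const_add 1
    have h2 : HasDerivAt (fun y => 1 - k * Real.tanh y) (-(k * (1 - Real.tanh x ^ 2))) x :=
      ((htanh x).const_mul k).const_sub 1
    have hg : HasDerivAt (fun y => (1 + k * Real.tanh y) / (1 - k * Real.tanh y))
        ((k * (1 - Real.tanh x ^ 2) * (1 - k * Real.tanh x) -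
          (1 + k * Real.tanh x) * -(k * (1 - Real.tanh x ^ 2))) / (1 - k * Real.tanh x) ^ 2) x :=
      h1.div h2 (ne_of_gt (hpos2 x))
    have hgpos : 0 < (1 + k * Real.tanh x) / (1 - k * Real.tanh x) :=
      div_pos (hpos1 x) (hpos2 x)
    have hlog := hg.log (ne_of_gt hgpos)
    have hfull : HasDerivAt (fun y => y - k / 2 *
        Real.log ((1 + k * Real.tanh y) / (1 - k * Real.tanh y)))
        (1 - k / 2 * (((k * (1 - Real.tanh x ^ 2) * (1 - k * Real.tanh x) -
          (1 + k * Real.tanh x) * -(k * (1 - Real.tanh x ^ 2))) / (1 - k * Real.tanh x) ^ 2) /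
          ((1 + k * Real.tanh x) / (1 - k * Real.tanh x)))) x :=
      (hasDerivAt_id x).sub (hlog.const_mul (k / 2))
    have hfeq : f = fun y => y - k / 2 *
        Real.log ((1 + k * Real.tanh y) / (1 - k * Real.tanh y)) := funext hf
    rw [hfeq]
    convert hfull using 1
    have h1' : (1 + k * Real.tanh x) ≠ 0 := ne_of_gt (hpos1 x)
    have h2' : (1 - k * Real.tanh x) ≠ 0 := ne_of_gt (hpos2 x)
    have h3' : (1 - k ^ 2 * Real.tanh x ^ 2) ≠ 0 := ne_of_gt (hposkt x)
    rw [hF]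
    field_simp
    ring
  -- f is strictly monotone
  have hmono : StrictMono f := by
    apply strictMono_of_deriv_pos
    intro x
    rw [(hfD x).deriv]
    exact hFpos x
  -- f is surjective
  have hcont : Continuous f := by
    rw [continuous_iff_continuousAt]; exact fun x => (hfD x).continuousAt
  set L : ℝ := Real.log (2 / (1 - |k|)) with hL
  have hbound : ∀ x : ℝ, |f x - x| ≤ L := by
    intro x
    have h1 := hpos1 x
    have h2 := hpos2 x
    have hktabs : |k * Real.tanh x| ≤ |k| := by
      rw [abs_mul]
      calc |k| * |Real.tanh x| ≤ |k| * 1 :=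
            mul_le_mul_of_nonneg_left (le_of_lt (htanh_lt x)) (abs_nonneg k)
        _ = |k| := mul_one _
    have hkt1 : k * Real.tanh x ≤ |k| := le_trans (le_abs_self _) hktabs
    have hkt2 : -|k| ≤ k * Real.tanh x := by
      have := neg_abs_le (k * Real.tanh x); linarith
    have hub : (1 + k * Real.tanh x) / (1 - k * Real.tanh x) ≤ 2 / (1 - |k|) :=
      div_le_div₀ (by norm_num) (by linarith) (by linarith) (by linarith)
    have hlb : (1 - |k|) / 2 ≤ (1 + k * Real.tanh x) / (1 - k * Real.tanh x) :=
      div_le_div₀ (by linarith) (by linarith) h2 (by linarith)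
    have hlogub : Real.log ((1 + k * Real.tanh x) / (1 - k * Real.tanh x)) ≤ L :=
      Real.log_le_log (div_pos h1 h2) hub
    have hloglb : -L ≤ Real.log ((1 + k * Real.tanh x) / (1 - k * Real.tanh x)) := by
      have h0 : (0:ℝ) < (1 - |k|) / 2 := div_pos (by linarith) two_pos
      have hmono' : Real.log ((1 - |k|) / 2) ≤
          Real.log ((1 + k * Real.tanh x) / (1 - k * Real.tanh x)) :=
        Real.log_le_log h0 hlb
      have heq : ((1 - |k|) / 2 : ℝ) = (2 / (1 - |k|))⁻¹ := by
        rw [inv_div]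
      rw [heq, Real.log_inv] at hmono'
      linarith
    have habslog : |Real.log ((1 + k * Real.tanh x) / (1 - k * Real.tanh x))| ≤ L := by
      rw [abs_le]; exact ⟨hloglb, hlogub⟩
    have hLpos : 0 ≤ L := by
      apply Real.log_nonneg
      rw [le_div_iff₀ (by linarith : (0:ℝ) < 1 - |k|)]
      have := abs_nonneg k; linarith
    have hk2half : |k / 2| ≤ 1 := by
      have : |k / 2| = |k| / 2 := by rw [abs_div, abs_two]
      rw [this]; linarith
    have hmain : |k / 2 * Real.log ((1 + k * Real.tanh x) / (1 - k * Real.tanh x))| ≤ L := by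
      rw [abs_mul]
      calc |k / 2| * |Real.log ((1 + k * Real.tanh x) / (1 - k * Real.tanh x))|
          ≤ 1 * L := mul_le_mul hk2half habslog (abs_nonneg _) (by norm_num)
        _ = L := one_mul _
    rw [hf x]
    have := abs_le.mp hmain
    rw [abs_le]
    constructor <;> linarith [this.1, this.2]
  have htop : Filter.Tendsto f Filter.atTop Filter.atTop := by
    apply Filter.tendsto_atTop_mono (fun x => ?_) (Filter.tendsto_atTop_add_const_right _ (-L) Filter.tendsto_id)
    have := abs_le.mp (hbound x)
    simp only [id_eq]
    linarith [this.1]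
  have hbot : Filter.Tendsto f Filter.atBot Filter.atBot := by
    apply Filter.tendsto_atBot_mono (fun x => ?_) (Filter.tendsto_atBot_add_const_right _ L Filter.tendsto_id)
    have := abs_le.mp (hbound x)
    simp only [id_eq]
    linarith [this.2]
  have hsurj : Function.Surjective f := hcont.surjective htop hbot
  set e : ℝ ≃o ℝ := StrictMono.orderIsoOfSurjective f hmono hsurj with he
  have hee : ∀ x, e x = f x := fun x => rfl
  have hsymm : ∀ y, f (e.symm y) = y := fun y => e.apply_symm_apply y
  have hsymm' : ∀ x, e.symm (f x) = x := fun x => e.symm_apply_apply x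
  have hcsymm : Continuous (e.symm : ℝ → ℝ) := OrderIso.continuous e.symm
  -- ξ agrees with e.symm ∘ (ν * ·) on Ioi 0
  have hξeq : ∀ τ ∈ Set.Ioi (0 : ℝ), ξ τ = e.symm (ν * τ) := by
    intro τ hτ
    have h1 : f (ξ τ) = ν * τ := (hξ τ hτ).symm
    have h2 : f (e.symm (ν * τ)) = ν * τ := hsymm _
    exact hmono.injective (by rw [h1, h2])
  intro τ₀ hτ₀
  set ξ₀ := ξ τ₀ with hξ₀
  have hξ₀pos : 0 < ξ₀ := hξpos τ₀ hτ₀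
  have hs₀ : 0 < Real.sinh ξ₀ := Real.sinh_pos_iff.mpr hξ₀pos
  have hc₀ := Real.cosh_pos ξ₀
  -- derivative of e.symm at ν τ₀
  have hy₀ : e.symm (ν * τ₀) = ξ₀ := (hξeq τ₀ hτ₀).symm
  have hinv : HasDerivAt (e.symm : ℝ → ℝ) (F ξ₀)⁻¹ (ν * τ₀) := by
    apply HasDerivAt.of_local_left_inverse hcsymm.continuousAt
      (by rw [hy₀]; exact hfD ξ₀) (ne_of_gt (hFpos ξ₀))
    exact Filter.Eventually.of_forall hsymm
  -- derivative of ξ at τ₀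
  have hlin : HasDerivAt (fun τ => ν * τ) ν τ₀ := by
    simpa using (hasDerivAt_id τ₀).const_mul ν
  have hcomp : HasDerivAt (fun τ => e.symm (ν * τ)) ((F ξ₀)⁻¹ * ν) τ₀ :=
    HasDerivAt.comp τ₀ hinv hlin
  have hξD : HasDerivAt ξ ((F ξ₀)⁻¹ * ν) τ₀ := by
    apply hcomp.congr_of_eventuallyEq
    filter_upwards [isOpen_Ioi.mem_nhds hτ₀] with τ hτ
    exact hξeq τ hτ
  -- derivative of u
  set ξ' : ℝ := (F ξ₀)⁻¹ * ν with hξ'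
  have hdc : HasDerivAt (fun τ => Real.cosh (ξ τ)) (Real.sinh ξ₀ * ξ') τ₀ :=
    HasDerivAt.comp τ₀ (Real.hasDerivAt_cosh ξ₀) hξD
  have hds : HasDerivAt (fun τ => Real.sinh (ξ τ)) (Real.cosh ξ₀ * ξ') τ₀ :=
    HasDerivAt.comp τ₀ (Real.hasDerivAt_sinh ξ₀) hξD
  have hdiv : HasDerivAt (fun τ => Real.cosh (ξ τ) / Real.sinh (ξ τ))
      ((Real.sinh ξ₀ * ξ' * Real.sinh ξ₀ - Real.cosh ξ₀ * (Real.cosh ξ₀ * ξ')) /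
        Real.sinh ξ₀ ^ 2) τ₀ := hdc.div hds (ne_of_gt hs₀)
  have hdu : HasDerivAt u (ν / (1 - k ^ 2) *
      ((Real.sinh ξ₀ * ξ' * Real.sinh ξ₀ - Real.cosh ξ₀ * (Real.cosh ξ₀ * ξ')) /
        Real.sinh ξ₀ ^ 2)) τ₀ := by
    have : u = fun τ => ν / (1 - k ^ 2) * (Real.cosh (ξ τ) / Real.sinh (ξ τ)) := funext hu
    rw [this]
    exact hdiv.const_mul _
  convert hdu using 1
  -- algebra
  simp only [hu τ₀, hu₁, hu₂, hξ', hF, Real.tanh_eq_sinh_div_cosh]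
  rw [← hξ₀]
  have hsq := Real.cosh_sq ξ₀
  have hne1 : Real.sinh ξ₀ ≠ 0 := ne_of_gt hs₀
  have hne2 : Real.cosh ξ₀ ≠ 0 := ne_of_gt hc₀
  have hne3 : (1 - k ^ 2) ≠ 0 := ne_of_gt hk1
  have hne4 : 1 - k ^ 2 * (Real.sinh ξ₀ / Real.cosh ξ₀) ^ 2 ≠ 0 := by
    have := hposkt ξ₀
    rw [Real.tanh_eq_sinh_div_cosh] at this
    exact ne_of_gt this
  field_simp
  ring_nf
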